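/- arXiv:1503.00984 — 3 statements merged into one kernel-verified Lean document; each statement's English description precedes it below -/
import Mathlib

section
/- (Equation (weak-ldp-1): left tail is super-exponentially small) For every x < b_w one has limsup_{n→∞} (1/n) log P_n(λ_n* ≤ x) = −∞. -/
/- Equation (weak-ldp-1) of Credner–Eichelsbacher: the left tail of the largest
   eigenvalue is super-exponentially small. -/

open MeasureTheory Filter Set Topology
open scoped ENNReal NNReal

/-- The Dirac measure as a finite measure. -/
noncomputable def diracFM (x : ℝ) : MeasureTheory.FiniteMeasure ℝ :=
  ⟨MeasureTheory.Measure.dirac x, inferInstance⟩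

/-- The empirical measure `(1/n) ∑_{j=1}^m δ_{λ_j}` as a finite measure. -/
noncomputable def empFM (n : ℕ) {m : ℕ} (lam : Fin m → ℝ) : MeasureTheory.FiniteMeasure ℝ :=
  (n : NNReal)⁻¹ • ∑ j : Fin m, diracFM (lam j)

/-- The interaction term `∏_{i<j} |λ_i - λ_j| |λ_i^θ - λ_j^θ|`. -/
def vandTheta (θ : ℕ) {m : ℕ} (lam : Fin m → ℝ) : ℝ :=
  ∏ i : Fin m, ∏ j : Fin m, if i < j then |lam i - lam j| * |lam i ^ θ - lam j ^ θ| else 1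

/-- The (topological) support of a Borel measure on `ℝ`. -/
def msupport (μ : MeasureTheory.Measure ℝ) : Set ℝ := {x : ℝ | ∀ U ∈ nhds x, μ U ≠ 0}

theorem largest_eigenvalue_left_tail
    -- basic data
    (θ : ℕ) (hθ : 1 ≤ θ) (κ : ℝ) (hκ : 0 < κ)
    (Sig : Set ℝ) (hSigClosed : IsClosed Sig) (hSigPos : Even θ → Sig ⊆ Set.Ici (0 : ℝ))
    (p : ℕ → ℕ) (hpκ : Tendsto (fun n => (p n : ℝ) / n) atTop (𝓝 κ))
    (hpstep : ∀ᶠ n in atTop, p (n - 1) = p n - 1) (hppos : ∀ n, 0 < p n)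
    -- weight functions
    (w : ℕ → ℝ → ℝ) (hwcont : ∀ n, ContinuousOn (w n) Sig)
    (hwnonneg : ∀ n, ∀ x ∈ Sig, 0 ≤ w n x)
    (wlim : ℝ → ℝ) (hwlimcont : ContinuousOn wlim Sig)
    (hwlimnonneg : ∀ x ∈ Sig, 0 ≤ wlim x)
    -- assumption (a1)
    (ha11 : {x ∈ Sig | wlim x = 0}.Finite)
    (ha11' : ∀ᶠ n in atTop, {x ∈ Sig | w n x = 0} ⊆ {x ∈ Sig | wlim x = 0})
    (ha12 : ∀ K : Set ℝ, IsCompact K → K ⊆ Sig →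
      TendstoUniformlyOn (fun n => w n) wlim atTop K ∧
      TendstoUniformlyOn (fun n x => Real.log (w n x)) (fun x => Real.log (wlim x)) atTop K)
    (ha13 : ∀ K : Set ℝ, IsCompact K → K ⊆ Sig → Disjoint K {x ∈ Sig | wlim x = 0} →
      ∃ C : NNReal, LipschitzOnWith C (fun x => Real.log (wlim x)) K)
    -- assumption (a2)
    (ha2 : ¬ Bornology.IsBounded Sig → ∃ n₀ : ℕ, ∃ ε > (0 : ℝ),
      ∀ δ > (0 : ℝ), ∃ R : ℝ, ∀ x ∈ Sig, R ≤ |x| → ∀ n ≥ n₀,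
        |x| ^ (((θ : ℝ) + 1) * (κ + ε)) * w n x ≤ δ)
    -- the eigenvalue distributions
    (Z : ℕ → ℝ) (hZpos : ∀ n, 0 < Z n)
    (P : (n : ℕ) → Measure (Fin (p n) → ℝ))
    (hP : ∀ n, P n = MeasureTheory.volume.withDensity fun lam =>
      ENNReal.ofReal (Set.indicator {v : Fin (p n) → ℝ | ∀ j, v j ∈ Sig}
        (fun v => (Z n)⁻¹ * vandTheta θ v * ∏ j, w n (v j) ^ n) lam))
    (hPprob : ∀ n, IsProbabilityMeasure (P n))
    -- assumption (Z)
    (ξ : ℝ) (hξ : Tendsto (fun n : ℕ => (n : ℝ)⁻¹ * Real.log (Z (n - 1) / Z n)) atTop (𝓝 ξ))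
    -- LDP for the empirical measures with speed n², good rate function J, unique minimiser μw
    (J : MeasureTheory.FiniteMeasure ℝ → ℝ≥0∞) (hJlsc : LowerSemicontinuous J)
    (hJgood : ∀ c : ℝ≥0∞, c ≠ ⊤ → IsCompact {μ : MeasureTheory.FiniteMeasure ℝ | J μ ≤ c})
    (hLDPup : ∀ F : Set (MeasureTheory.FiniteMeasure ℝ), IsClosed F →
      Filter.limsup (fun n : ℕ => (((n : ℝ) ^ 2)⁻¹ : EReal) *
          ENNReal.log (P n {lam | empFM n lam ∈ F})) atTop
        ≤ - ⨅ μ ∈ F, (J μ : EReal))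
    (hLDPlow : ∀ G : Set (MeasureTheory.FiniteMeasure ℝ), IsOpen G →
      - ⨅ μ ∈ G, (J μ : EReal) ≤
        Filter.liminf (fun n : ℕ => (((n : ℝ) ^ 2)⁻¹ : EReal) *
          ENNReal.log (P n {lam | empFM n lam ∈ G})) atTop)
    (μw : Measure ℝ) [IsProbabilityMeasure μw]
    (hμwcpt : IsCompact (closure (msupport μw))) (hμwSig : μw Sigᶜ = 0)
    (hμwmin : J ⟨μw, inferInstance⟩ = 0 ∧
      ∀ μ : MeasureTheory.FiniteMeasure ℝ, J μ = 0 → μ = ⟨μw, inferInstance⟩)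
    (bw : ℝ) (hbw : IsLUB (msupport μw) bw) :
    -- conclusion: for every x < bw, limsup (1/n) log P_n(λ_n* ≤ x) = -∞
    ∀ x : ℝ, x < bw →
      Filter.limsup (fun n : ℕ => ((n : ℝ)⁻¹ : EReal) *
        ENNReal.log (P n {lam | (⨆ j, lam j) ≤ x})) atTop = (⊥ : EReal) := by
  intro x hx
  -- Step 1: a support point above x
  obtain ⟨y, hy, hxy⟩ : ∃ y ∈ msupport μw, x < y := by
    by_contra h
    push_neg at h
    exact absurd (hbw.2 fun a ha => h a ha) (not_le.2 hx)
  -- Step 2: the test function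
  have gcont : Continuous fun t : ℝ => min 1 (max 0 (t - x)) :=
    continuous_const.min (continuous_const.max (continuous_id.sub continuous_const))
  have h1 : ∀ t : ℝ, 0 ≤ min 1 (max 0 (t - x)) := fun t =>
    le_min zero_le_one (le_max_left 0 _)
  have h2 : ∀ t : ℝ, min 1 (max 0 (t - x)) ≤ 1 := fun t => min_le_left _ _
  let fb : BoundedContinuousFunction ℝ ℝ := BoundedContinuousFunction.mkOfBound ⟨_, gcont⟩ 1 (by
    intro a b
    simp only [ContinuousMap.coe_mk, Real.dist_eq, abs_sub_le_iff]
    constructor <;> nlinarith [h1 a, h1 b, h2 a, h2 b])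
  let f : BoundedContinuousFunction ℝ ℝ≥0 := fb.nnrealPart
  have hfb : ∀ t : ℝ, fb t = min 1 (max 0 (t - x)) := fun t => rfl
  have hfval : ∀ t : ℝ, f t = Real.toNNReal (min 1 (max 0 (t - x))) := fun t => rfl
  have hf0 : ∀ t : ℝ, t ≤ x → f t = 0 := by
    intro t ht
    rw [hfval]
    have : max 0 (t - x) = 0 := max_eq_left (by linarith)
    simp [this]
  have hfpos : ∀ t : ℝ, x < t → f t ≠ 0 := by
    intro t ht
    rw [hfval]
    simp only [ne_eq, Real.toNNReal_eq_zero, not_le]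
    have : (0:ℝ) < max 0 (t - x) := lt_max_of_lt_right (by linarith)
    exact lt_min one_pos this
  -- Step 3: the closed set F
  set F : Set (MeasureTheory.FiniteMeasure ℝ) :=
    (fun μ : MeasureTheory.FiniteMeasure ℝ => μ.testAgainstNN f) ⁻¹' {0} with hFdef
  have hFclosed : IsClosed F :=
    isClosed_singleton.preimage (MeasureTheory.FiniteMeasure.continuous_testAgainstNN_eval f)
  have hfm : Measurable fun ω : ℝ => (f ω : ℝ≥0∞) :=
    ENNReal.continuous_coe.measurable.comp f.continuous.measurable
  -- Step 4: μw ∉ F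
  have hμwF : (⟨μw, inferInstance⟩ : MeasureTheory.FiniteMeasure ℝ) ∉ F := by
    intro hmem
    have key : ((MeasureTheory.FiniteMeasure.testAgainstNN ⟨μw, inferInstance⟩ f : ℝ≥0) : ℝ≥0∞)
        = ∫⁻ ω, (f ω : ℝ≥0∞) ∂μw :=
      MeasureTheory.FiniteMeasure.testAgainstNN_coe_eq
    have h0 : ∫⁻ ω, (f ω : ℝ≥0∞) ∂μw = 0 := by
      rw [← key]
      have h00 : MeasureTheory.FiniteMeasure.testAgainstNN ⟨μw, inferInstance⟩ f = 0 := hmem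
      rw [h00]; simp
    have hae := (MeasureTheory.lintegral_eq_zero_iff hfm).1 h0
    have hnull : μw {ω : ℝ | (f ω : ℝ≥0∞) ≠ 0} = 0 := by
      have := hae
      rw [Filter.EventuallyEq, MeasureTheory.ae_iff] at this
      simpa using this
    have hIoi : μw (Set.Ioi x) = 0 := by
      refine measure_mono_null ?_ hnull
      intro t ht
      simp only [Set.mem_setOf_eq, ne_eq, ENNReal.coe_eq_zero]
      exact hfpos t ht
    exact hy (Set.Ioi x) (Ioi_mem_nhds hxy) hIoi
  -- Step 5: inclusion of events
  have hincl : ∀ n : ℕ, {lam : Fin (p n) → ℝ | (⨆ j, lam j) ≤ x}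
      ⊆ {lam : Fin (p n) → ℝ | empFM n lam ∈ F} := by
    intro n lam hlam
    have : Nonempty (Fin (p n)) := ⟨⟨0, hppos n⟩⟩
    have hjle : ∀ j, lam j ≤ x := fun j =>
      le_trans (le_ciSup (Set.Finite.bddAbove (Set.finite_range lam)) j) hlam
    have hμ : ((empFM n lam : MeasureTheory.FiniteMeasure ℝ) : Measure ℝ)
        = ((n : ℝ≥0)⁻¹ : ℝ≥0) • ∑ j : Fin (p n), MeasureTheory.Measure.dirac (lam j) := by
      rw [empFM, MeasureTheory.FiniteMeasure.toMeasure_smul]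
      congr 1
      exact map_sum MeasureTheory.FiniteMeasure.toMeasureAddMonoidHom _ _
    show (empFM n lam).testAgainstNN f ∈ ({0} : Set ℝ≥0)
    have hS : MeasurableSet {ω : ℝ | (f ω : ℝ≥0∞) ≠ 0} :=
      (hfm (measurableSet_singleton 0)).compl
    have hnull : ((empFM n lam : MeasureTheory.FiniteMeasure ℝ) : Measure ℝ)
        {ω : ℝ | (f ω : ℝ≥0∞) ≠ 0} = 0 := by
      rw [hμ, MeasureTheory.Measure.smul_apply, MeasureTheory.Measure.finset_sum_apply]
      have : ∀ j : Fin (p n),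
          MeasureTheory.Measure.dirac (lam j) {ω : ℝ | (f ω : ℝ≥0∞) ≠ 0} = 0 := by
        intro j
        rw [MeasureTheory.Measure.dirac_apply' _ hS]
        have hz : f (lam j) = 0 := hf0 _ (hjle j)
        have : lam j ∉ {ω : ℝ | (f ω : ℝ≥0∞) ≠ 0} := by
          simp [hz]
        simp only [Set.indicator_of_notMem this]
      rw [Finset.sum_eq_zero (fun j _ => this j), smul_zero]
    have hcoe0 : ((empFM n lam).testAgainstNN f : ℝ≥0∞) = 0 := by
      rw [MeasureTheory.FiniteMeasure.testAgainstNN_coe_eq]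
      refine (MeasureTheory.lintegral_eq_zero_iff hfm).2 ?_
      rw [Filter.EventuallyEq, MeasureTheory.ae_iff]
      simpa using hnull
    simpa using ENNReal.coe_eq_zero.1 hcoe0
  -- Step 6: the infimum of J over F is positive
  have hcne : (⨅ μ ∈ F, J μ) ≠ 0 := by
    intro hc
    set K : ℕ → Set (MeasureTheory.FiniteMeasure ℝ) :=
      fun n => F ∩ {μ | J μ ≤ ((n : ℝ≥0∞) + 1)⁻¹} with hK
    have hKcl : ∀ n, IsClosed (K n) := fun n =>
      hFclosed.inter (hJlsc.isClosed_preimage _)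
    have hKcpt : IsCompact (K 0) :=
      (hJgood _ (by simp)).inter_left hFclosed
    have hKne : ∀ n, (K n).Nonempty := by
      intro n
      have hpos : (⨅ μ ∈ F, J μ) < ((n : ℝ≥0∞) + 1)⁻¹ := by
        rw [hc]
        exact ENNReal.inv_pos.2 (by simp)
      rw [iInf_lt_iff] at hpos
      obtain ⟨μ, hμ⟩ := hpos
      rw [iInf_lt_iff] at hμ
      obtain ⟨hμF, hμJ⟩ := hμ
      exact ⟨μ, hμF, le_of_lt hμJ⟩
    have hKdec : ∀ n, K (n + 1) ⊆ K n := by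
      intro n
      apply Set.inter_subset_inter_right
      intro μ hμ
      refine le_trans hμ (ENNReal.inv_le_inv.2 ?_)
      gcongr
      exact_mod_cast Nat.le_succ n
    obtain ⟨μ0, hμ0⟩ := IsCompact.nonempty_iInter_of_sequence_nonempty_isCompact_isClosed
      K hKdec hKne hKcpt hKcl
    have hμ0F : μ0 ∈ F := (Set.mem_iInter.1 hμ0 0).1
    have hμ0J : J μ0 = 0 := by
      by_contra hne
      obtain ⟨m, hm⟩ := ENNReal.exists_inv_nat_lt hne
      have h1 : J μ0 ≤ ((m : ℝ≥0∞) + 1)⁻¹ := (Set.mem_iInter.1 hμ0 m).2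
      have h2 : ((m : ℝ≥0∞) + 1)⁻¹ ≤ (m : ℝ≥0∞)⁻¹ :=
        ENNReal.inv_le_inv.2 (le_add_of_nonneg_right (zero_le (a := (1 : ℝ≥0∞))))
      exact absurd (h1.trans h2) (not_le.2 hm)
    have := hμwmin.2 μ0 hμ0J
    rw [this] at hμ0F
    exact hμwF hμ0F
  -- Step 7: a real lower bound r on the rate over F
  set d : ℝ≥0∞ := min (⨅ μ ∈ F, J μ) 1 with hd
  have hd0 : d ≠ 0 := by
    simp only [hd, ne_eq, min_eq_iff]
    rintro (⟨h, -⟩ | ⟨h, -⟩)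
    · exact hcne h
    · exact one_ne_zero h
  have hdtop : d ≠ ⊤ := ne_top_of_le_ne_top ENNReal.one_ne_top (min_le_right _ _)
  set r : ℝ := d.toReal with hr
  have hrpos : 0 < r := ENNReal.toReal_pos hd0 hdtop
  have hdcoe : (d : EReal) = (r : EReal) := by
    rw [hr, ← ENNReal.ofReal_toReal hdtop]
    rw [EReal.coe_ennreal_ofReal]
    rw [max_eq_left (ENNReal.toReal_nonneg)]
    simp [ENNReal.toReal_ofReal ENNReal.toReal_nonneg]
  have hrlow : (r : EReal) ≤ ⨅ μ ∈ F, ((J μ : ℝ≥0∞) : EReal) := by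
    refine le_iInf₂ fun μ hμ => ?_
    rw [← hdcoe]
    refine EReal.coe_ennreal_le_coe_ennreal_iff.2 ?_
    exact le_trans (min_le_left _ _) (iInf₂_le μ hμ)
  -- Step 8: upper LDP bound gives eventual decay at speed n²
  have hup := hLDPup F hFclosed
  have hlimsup : Filter.limsup (fun n : ℕ => (((n : ℝ) ^ 2)⁻¹ : EReal) *
      ENNReal.log (P n {lam | empFM n lam ∈ F})) atTop ≤ ((-r : ℝ) : EReal) := by
    refine hup.trans ?_
    rw [EReal.coe_neg]
    exact EReal.neg_le_neg_iff.2 hrlow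
  have hev : ∀ᶠ n : ℕ in atTop, (((n : ℝ) ^ 2)⁻¹ : EReal) *
      ENNReal.log (P n {lam | empFM n lam ∈ F}) < ((-(r/2) : ℝ) : EReal) := by
    refine eventually_lt_of_limsup_lt (lt_of_le_of_lt hlimsup ?_)
    exact_mod_cast (by linarith : -r < -(r/2))
  -- Step 9: conclude pointwise bound for all M
  have hbotR : Tendsto (fun n : ℕ => (n : ℝ) * (-(r/2))) atTop atBot :=
    Tendsto.atTop_mul_const_of_neg (by linarith) tendsto_natCast_atTop_atTop
  have hT : ∀ M : ℝ, ∀ᶠ n : ℕ in atTop, ((n : ℝ)⁻¹ : EReal) *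
      ENNReal.log (P n {lam | (⨆ j, lam j) ≤ x}) ≤ (M : EReal) := by
    intro M
    filter_upwards [hev, hbotR.eventually (eventually_le_atBot M),
      eventually_ge_atTop 1] with n hn1 hn2 hn3
    have hnne : (n : ℝ) ≠ 0 := by
      have : (1 : ℝ) ≤ (n : ℝ) := by exact_mod_cast hn3
      linarith
    have hmono : (P n) {lam | (⨆ j, lam j) ≤ x} ≤ (P n) {lam | empFM n lam ∈ F} :=
      measure_mono (hincl n)
    have hlog := ENNReal.log_monotone hmono
    have hc2 : ((((n : ℝ) : EReal)) ^ 2)⁻¹ = (((((n : ℝ) ^ 2)⁻¹ : ℝ)) : EReal) := by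
      rw [← EReal.coe_pow, EReal.coe_inv]
    have hc1 : (((n : ℝ) : EReal))⁻¹ = ((((n : ℝ)⁻¹ : ℝ)) : EReal) := by
      rw [EReal.coe_inv]
    have hA : (((n : ℝ) ^ 2)⁻¹ : EReal) * ENNReal.log (P n {lam | (⨆ j, lam j) ≤ x})
        ≤ ((-(r/2) : ℝ) : EReal) := by
      refine le_trans (mul_le_mul_of_nonneg_left hlog ?_) hn1.le
      rw [hc2]
      exact EReal.coe_nonneg.2 (by positivity)
    have hfrac : ((n : ℝ)⁻¹ : ℝ) = (n : ℝ) * ((n : ℝ) ^ 2)⁻¹ := by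
      field_simp
    calc ((n : ℝ)⁻¹ : EReal) * ENNReal.log (P n {lam | (⨆ j, lam j) ≤ x})
        = ((n : ℝ) : EReal) * ((((n : ℝ) ^ 2)⁻¹ : EReal) *
            ENNReal.log (P n {lam | (⨆ j, lam j) ≤ x})) := by
          rw [hc1, hc2, ← mul_assoc, ← EReal.coe_mul, ← hfrac]
      _ ≤ ((n : ℝ) : EReal) * ((-(r/2) : ℝ) : EReal) :=
          mul_le_mul_of_nonneg_left hA (EReal.coe_nonneg.2 (Nat.cast_nonneg n))
      _ = (((n : ℝ) * (-(r/2)) : ℝ) : EReal) := (EReal.coe_mul _ _).symm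
      _ ≤ (M : EReal) := EReal.coe_le_coe_iff.2 hn2
  -- Step 10: limsup = ⊥
  have hls : ∀ M : ℝ, Filter.limsup (fun n : ℕ => ((n : ℝ)⁻¹ : EReal) *
      ENNReal.log (P n {lam | (⨆ j, lam j) ≤ x})) atTop ≤ (M : EReal) := fun M =>
    limsup_le_of_le (by isBoundedDefault) (hT M)
  by_contra hbot'
  obtain ⟨M, hM1, hM2⟩ := EReal.exists_between_coe_real (Ne.bot_lt hbot')
  exact absurd (hls M) (not_le.2 hM2)
end

section
/- (Chiral-ensemble integral, Equation (5.55)) For all real numbers 0 < a < b and x > √b: ∫_{√a}^{√b} 2x·√((y²−a)(b−y²)) / ((x²−y²)·y) dy = (π/x)·( x² − √((x²−a)(x²−b)) − √(ab) ). -/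
/- Equation (5.55) of Credner–Eichelsbacher: the chiral-ensemble integral. -/

open Real

set_option maxHeartbeats 1000000 in
theorem chiral_ensemble_integral
    (a b x : ℝ) (ha : 0 < a) (hab : a < b) (hx : Real.sqrt b < x) :
    (∫ y in Real.sqrt a..Real.sqrt b,
        2 * x * Real.sqrt ((y ^ 2 - a) * (b - y ^ 2)) / ((x ^ 2 - y ^ 2) * y))
      = (π / x) * (x ^ 2 - Real.sqrt ((x ^ 2 - a) * (x ^ 2 - b)) - Real.sqrt (a * b)) := by
  have hb : (0:ℝ) < b := ha.trans hab
  have hba : (0:ℝ) < b - a := by linarith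
  have hsa0 : 0 < Real.sqrt a := Real.sqrt_pos.2 ha
  have hsb0 : 0 < Real.sqrt b := Real.sqrt_pos.2 hb
  have hx0 : 0 < x := hsb0.trans hx
  have sqa2 : (Real.sqrt a)^2 = a := Real.sq_sqrt ha.le
  have sqb2 : (Real.sqrt b)^2 = b := Real.sq_sqrt hb.le
  have hx2 : b < x^2 := by nlinarith [Real.sqrt_nonneg b]
  have hax2 : a < x^2 := by linarith
  have hle : Real.sqrt a ≤ Real.sqrt b := Real.sqrt_le_sqrt hab.le
  set S := Real.sqrt (a*b) with hSdef
  set D := Real.sqrt ((x^2-a)*(x^2-b)) with hDdef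
  have hS2 : S^2 = a*b := Real.sq_sqrt (by positivity)
  have hS0 : 0 < S := Real.sqrt_pos.2 (by positivity)
  have hD2 : D^2 = (x^2-a)*(x^2-b) := Real.sq_sqrt (by nlinarith)
  have hD0 : 0 < D := Real.sqrt_pos.2 (by nlinarith)
  set G : ℝ → ℝ := fun y =>
    x * Real.arcsin ((2*y^2-a-b)/(b-a))
    - S/x * Real.arcsin (((a+b)*y^2 - 2*(a*b))/((b-a)*y^2))
    + D/x * Real.arcsin (((2*x^2-a-b)*(x^2-y^2) - 2*((x^2-a)*(x^2-b)))/((b-a)*(x^2-y^2)))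
    with hGdef
  -- bounds on y in the closed interval
  have hmem : ∀ y ∈ Set.Icc (Real.sqrt a) (Real.sqrt b), 0 < y ∧ a ≤ y^2 ∧ y^2 ≤ b := by
    intro y hy
    have h1 : Real.sqrt a ≤ y := hy.1
    have h2 : y ≤ Real.sqrt b := hy.2
    have hy0 : 0 < y := lt_of_lt_of_le hsa0 h1
    refine ⟨hy0, ?_, ?_⟩
    · nlinarith
    · nlinarith [Real.sqrt_nonneg b]
  -- continuity helpers
  have cu1 : Continuous fun y : ℝ => (2*y^2-a-b)/(b-a) :=
    (((continuous_const.mul (continuous_pow 2)).sub continuous_const).sub continuous_const).div_const _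
  have num2 : Continuous fun y : ℝ => (a+b)*y^2 - 2*(a*b) :=
    (continuous_const.mul (continuous_pow 2)).sub continuous_const
  have den2 : Continuous fun y : ℝ => (b-a)*y^2 := continuous_const.mul (continuous_pow 2)
  have num3 : Continuous fun y : ℝ => (2*x^2-a-b)*(x^2-y^2) - 2*((x^2-a)*(x^2-b)) :=
    (continuous_const.mul (continuous_const.sub (continuous_pow 2))).sub continuous_const
  have den3 : Continuous fun y : ℝ => (b-a)*(x^2-y^2) :=
    continuous_const.mul (continuous_const.sub (continuous_pow 2))
  have numI : Continuous fun y : ℝ => 2*x*Real.sqrt ((y^2-a)*(b-y^2)) :=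
    continuous_const.mul (Real.continuous_sqrt.comp
      (((continuous_pow 2).sub continuous_const).mul (continuous_const.sub (continuous_pow 2))))
  have denI : Continuous fun y : ℝ => (x^2-y^2)*y :=
    (continuous_const.sub (continuous_pow 2)).mul continuous_id
  -- continuity of G on the closed interval
  have hcont : ContinuousOn G (Set.Icc (Real.sqrt a) (Real.sqrt b)) := by
    rw [hGdef]
    apply ContinuousOn.add
    apply ContinuousOn.sub
    · exact (continuous_const.mul (Real.continuous_arcsin.comp cu1)).continuousOn
    · apply ContinuousOn.mul continuousOn_const
      apply Real.continuous_arcsin.comp_continuousOn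
      apply ContinuousOn.div num2.continuousOn den2.continuousOn
      intro y hy
      obtain ⟨hy0, -, -⟩ := hmem y hy
      positivity
    · apply ContinuousOn.mul continuousOn_const
      apply Real.continuous_arcsin.comp_continuousOn
      apply ContinuousOn.div num3.continuousOn den3.continuousOn
      intro y hy
      obtain ⟨hy0, -, hyb⟩ := hmem y hy
      have : 0 < x^2 - y^2 := by nlinarith
      positivity
  -- integrability of the integrand
  have hint : IntervalIntegrable
      (fun y => 2 * x * Real.sqrt ((y ^ 2 - a) * (b - y ^ 2)) / ((x ^ 2 - y ^ 2) * y))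
      MeasureTheory.volume (Real.sqrt a) (Real.sqrt b) := by
    apply ContinuousOn.intervalIntegrable
    rw [Set.uIcc_of_le hle]
    apply ContinuousOn.div numI.continuousOn denI.continuousOn
    intro y hy
    obtain ⟨hy0, -, hyb⟩ := hmem y hy
    have : 0 < x^2 - y^2 := by nlinarith
    positivity
  -- derivative of G on the open interval
  have hderiv : ∀ y ∈ Set.Ioo (Real.sqrt a) (Real.sqrt b),
      HasDerivWithinAt G
        (2 * x * Real.sqrt ((y ^ 2 - a) * (b - y ^ 2)) / ((x ^ 2 - y ^ 2) * y))
        (Set.Ioi y) y := by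
    intro y hy
    have hy0 : 0 < y := lt_trans hsa0 hy.1
    have ha2 : a < y^2 := by nlinarith [hy.1, sqa2, hsa0]
    have hb2 : y^2 < b := by nlinarith [hy.2, sqb2, hy0]
    have hs : 0 < x^2 - y^2 := by linarith
    set R := Real.sqrt ((y^2-a)*(b-y^2)) with hRdef
    have hR2 : R^2 = (y^2-a)*(b-y^2) := Real.sq_sqrt (by nlinarith)
    have hR0 : 0 < R := Real.sqrt_pos.2 (by nlinarith)
    -- first term
    have H1 : HasDerivAt (fun y : ℝ => Real.arcsin ((2*y^2-a-b)/(b-a))) (2*y/R) y := by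
      have hinner : HasDerivAt (fun y : ℝ => (2*y^2-a-b)/(b-a)) (4*y/(b-a)) y := by
        have h := ((((hasDerivAt_pow 2 y).const_mul (2:ℝ)).sub_const a).sub_const b).div_const (b-a)
        convert h using 1
        · rfl
        · rfl
        ring
      have e1 : 1 - ((2*y^2-a-b)/(b-a))^2 = (2*R/(b-a))^2 := by
        field_simp
        linear_combination (-4:ℝ) * hR2
      have hlt : ((2*y^2-a-b)/(b-a))^2 < 1 := by
        have hpos : 0 < (2*R/(b-a))^2 := by positivity
        linarith
      have habs : |(2*y^2-a-b)/(b-a)| < 1 := by rwa [← sq_lt_one_iff_abs_lt_one]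
      have hne1 : (2*y^2-a-b)/(b-a) ≠ -1 := by have := (abs_lt.1 habs).1; linarith
      have hne2 : (2*y^2-a-b)/(b-a) ≠ 1 := by have := (abs_lt.1 habs).2; linarith
      have := (Real.hasDerivAt_arcsin hne1 hne2).comp y hinner
      convert this using 1
      · rfl
      · rfl
      · rfl
      rw [e1, Real.sqrt_sq (by positivity)]
      field_simp
      ring
    -- second term
    have H2 : HasDerivAt (fun y : ℝ => Real.arcsin (((a+b)*y^2 - 2*(a*b))/((b-a)*y^2)))
        (2*S/(y*R)) y := by
      have hg0 : (b-a)*y^2 ≠ 0 := by positivity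
      have hinner : HasDerivAt (fun y : ℝ => ((a+b)*y^2 - 2*(a*b))/((b-a)*y^2))
          (4*(a*b)/((b-a)*y^3)) y := by
        have hf : HasDerivAt (fun y : ℝ => (a+b)*y^2 - 2*(a*b)) (2*(a+b)*y) y := by
          have := ((hasDerivAt_pow 2 y).const_mul (a+b)).sub_const (2*(a*b))
          convert this using 1; rfl; rfl; ring
        have hg : HasDerivAt (fun y : ℝ => (b-a)*y^2) (2*(b-a)*y) y := by
          have := (hasDerivAt_pow 2 y).const_mul (b-a)
          convert this using 1; rfl; rfl; ring
        have := hf.div hg hg0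
        convert this using 1
        · rfl
        · rfl
        · rfl
        field_simp
        ring
      have e2 : 1 - (((a+b)*y^2 - 2*(a*b))/((b-a)*y^2))^2 = (2*S*R/((b-a)*y^2))^2 := by
        have key : (2*S*R)^2 = 4*(a*b)*((y^2-a)*(b-y^2)) := by
          rw [mul_pow, mul_pow, hS2, hR2]; ring
        rw [div_pow, div_pow, key]
        field_simp
        ring
      have hlt : (((a+b)*y^2 - 2*(a*b))/((b-a)*y^2))^2 < 1 := by
        have hpos : 0 < (2*S*R/((b-a)*y^2))^2 := by positivity
        linarith
      have habs : |((a+b)*y^2 - 2*(a*b))/((b-a)*y^2)| < 1 := by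
        rwa [← sq_lt_one_iff_abs_lt_one]
      have hne1 : ((a+b)*y^2 - 2*(a*b))/((b-a)*y^2) ≠ -1 := by have := (abs_lt.1 habs).1; linarith
      have hne2 : ((a+b)*y^2 - 2*(a*b))/((b-a)*y^2) ≠ 1 := by have := (abs_lt.1 habs).2; linarith
      have := (Real.hasDerivAt_arcsin hne1 hne2).comp y hinner
      convert this using 1
      · rfl
      · rfl
      · rfl
      rw [e2, Real.sqrt_sq (by positivity)]
      field_simp
      linear_combination (4:ℝ) * hS2
    -- third term
    have H3 : HasDerivAt (fun y : ℝ =>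
        Real.arcsin (((2*x^2-a-b)*(x^2-y^2) - 2*((x^2-a)*(x^2-b)))/((b-a)*(x^2-y^2))))
        (-(2*D*y/((x^2-y^2)*R))) y := by
      have hg0 : (b-a)*(x^2-y^2) ≠ 0 := by positivity
      have hinner : HasDerivAt
          (fun y : ℝ => ((2*x^2-a-b)*(x^2-y^2) - 2*((x^2-a)*(x^2-b)))/((b-a)*(x^2-y^2)))
          (-(4*y*((x^2-a)*(x^2-b)))/((b-a)*(x^2-y^2)^2)) y := by
        have hs' : HasDerivAt (fun y : ℝ => x^2 - y^2) (-(2*y)) y := by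
          have := (hasDerivAt_pow 2 y).const_sub (x^2)
          convert this using 1; rfl; rfl; ring
        have hf : HasDerivAt (fun y : ℝ => (2*x^2-a-b)*(x^2-y^2) - 2*((x^2-a)*(x^2-b)))
            ((2*x^2-a-b)*(-(2*y))) y := (hs'.const_mul (2*x^2-a-b)).sub_const _
        have hg : HasDerivAt (fun y : ℝ => (b-a)*(x^2-y^2)) ((b-a)*(-(2*y))) y :=
          hs'.const_mul (b-a)
        have := hf.div hg hg0
        convert this using 1
        · rfl
        · rfl
        · rfl
        field_simp
        ring
      have e3 : 1 - (((2*x^2-a-b)*(x^2-y^2) - 2*((x^2-a)*(x^2-b)))/((b-a)*(x^2-y^2)))^2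
          = (2*D*R/((b-a)*(x^2-y^2)))^2 := by
        have key : (2*D*R)^2 = 4*((x^2-a)*(x^2-b))*((y^2-a)*(b-y^2)) := by
          rw [mul_pow, mul_pow, hD2, hR2]; ring
        rw [div_pow, div_pow, key]
        field_simp
        ring
      have hlt : (((2*x^2-a-b)*(x^2-y^2) - 2*((x^2-a)*(x^2-b)))/((b-a)*(x^2-y^2)))^2 < 1 := by
        have hpos : 0 < (2*D*R/((b-a)*(x^2-y^2)))^2 := by positivity
        linarith
      have habs : |((2*x^2-a-b)*(x^2-y^2) - 2*((x^2-a)*(x^2-b)))/((b-a)*(x^2-y^2))| < 1 := by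
        rwa [← sq_lt_one_iff_abs_lt_one]
      have hne1 : ((2*x^2-a-b)*(x^2-y^2) - 2*((x^2-a)*(x^2-b)))/((b-a)*(x^2-y^2)) ≠ -1 := by
        have := (abs_lt.1 habs).1; linarith
      have hne2 : ((2*x^2-a-b)*(x^2-y^2) - 2*((x^2-a)*(x^2-b)))/((b-a)*(x^2-y^2)) ≠ 1 := by
        have := (abs_lt.1 habs).2; linarith
      have := (Real.hasDerivAt_arcsin hne1 hne2).comp y hinner
      convert this using 1
      · rfl
      · rfl
      · rfl
      rw [e3, Real.sqrt_sq (by positivity)]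
      field_simp
      linear_combination (-4:ℝ) * hD2
    have H := ((H1.const_mul x).sub (H2.const_mul (S/x))).add (H3.const_mul (D/x))
    have Hfinal : HasDerivAt G (2 * x * R / ((x ^ 2 - y ^ 2) * y)) y := by
      rw [hGdef]
      convert H using 1
      · rfl
      · rfl
      · rfl
      have hR' : R ≠ 0 := ne_of_gt hR0
      have hx' : x ≠ 0 := ne_of_gt hx0
      have hy' : y ≠ 0 := ne_of_gt hy0
      have hs' : x^2 - y^2 ≠ 0 := ne_of_gt hs
      have key : x^2*y^2*(x^2-y^2) - S^2*(x^2-y^2) - D^2*y^2 = x^2*R^2 := by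
        rw [hR2, hS2, hD2]; ring
      rw [show x*(2*y/R) - S/x*(2*S/(y*R)) + D/x*(-(2*D*y/((x^2-y^2)*R)))
          = 2*(x^2*y^2*(x^2-y^2) - S^2*(x^2-y^2) - D^2*y^2)/(x*y*(x^2-y^2)*R) from by
        field_simp
        ring, key]
      field_simp
    exact Hfinal.hasDerivWithinAt
  rw [intervalIntegral.integral_eq_sub_of_hasDeriv_right_of_le hle hcont hderiv hint]
  -- evaluate endpoints
  have A1b : (2*(Real.sqrt b)^2-a-b)/(b-a) = 1 := by
    rw [sqb2, div_eq_one_iff_eq (by linarith : b - a ≠ 0)]; ring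
  have A2b : ((a+b)*(Real.sqrt b)^2 - 2*(a*b))/((b-a)*(Real.sqrt b)^2) = 1 := by
    rw [sqb2, div_eq_one_iff_eq (by positivity)]; ring
  have A3b : ((2*x^2-a-b)*(x^2-(Real.sqrt b)^2) - 2*((x^2-a)*(x^2-b)))/((b-a)*(x^2-(Real.sqrt b)^2)) = -1 := by
    rw [sqb2, div_eq_iff (by nlinarith : (b-a)*(x^2-b) ≠ 0)]; ring
  have A1a : (2*(Real.sqrt a)^2-a-b)/(b-a) = -1 := by
    rw [sqa2, div_eq_iff (by linarith : b - a ≠ 0)]; ring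
  have A2a : ((a+b)*(Real.sqrt a)^2 - 2*(a*b))/((b-a)*(Real.sqrt a)^2) = -1 := by
    rw [sqa2, div_eq_iff (by positivity : (b-a)*a ≠ 0)]; ring
  have A3a : ((2*x^2-a-b)*(x^2-(Real.sqrt a)^2) - 2*((x^2-a)*(x^2-b)))/((b-a)*(x^2-(Real.sqrt a)^2)) = 1 := by
    rw [sqa2, div_eq_one_iff_eq (by nlinarith : (b-a)*(x^2-a) ≠ 0)]; ring
  rw [hGdef]
  simp only [A1b, A2b, A3b, A1a, A2a, A3a, Real.arcsin_one, Real.arcsin_neg_one]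
  field_simp
  ring
end

section
/- (Mean of the limiting spectral density for disordered bosons, Section 3.1) Let b = 3√3 and define ρ_∞(t) = (1/(2π)) · (t/b)^{−1/3} · [ (1 + √(1 − t²/b²))^{1/3} − (1 − √(1 − t²/b²))^{1/3} ] for 0 < t ≤ b. Then ∫_0^{3√3} t · ρ_∞(t) dt = 3/2. -/
/- Section 3.1 of Credner–Eichelsbacher: the mean of the limiting spectral
   density of the disordered-boson ensemble equals 3/2. -/

open Real MeasureTheory intervalIntegral Set


lemma real_beta {a b : ℝ} (ha : 0 < a) (hb : 0 < b) :
    ∫ x in (0:ℝ)..1, x ^ (a - 1) * (1 - x) ^ (b - 1) =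
      Real.Gamma a * Real.Gamma b / Real.Gamma (a + b) := by
  have key := Complex.Gamma_mul_Gamma_eq_betaIntegral (s := a) (t := b)
    (by simpa using ha) (by simpa using hb)
  have hβ : Complex.betaIntegral a b =
      ((∫ x in (0:ℝ)..1, x ^ (a - 1) * (1 - x) ^ (b - 1) : ℝ) : ℂ) := by
    rw [Complex.betaIntegral, ← intervalIntegral.integral_ofReal]
    refine intervalIntegral.integral_congr fun x hx => ?_
    rw [Set.uIcc_of_le (by norm_num : (0:ℝ) ≤ 1)] at hx
    have e1 : (a:ℂ) - 1 = ((a - 1 : ℝ) : ℂ) := by push_cast; ring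
    have e2 : (b:ℂ) - 1 = ((b - 1 : ℝ) : ℂ) := by push_cast; ring
    have e3 : (1 : ℂ) - (x:ℂ) = ((1 - x : ℝ) : ℂ) := by push_cast; ring
    rw [e1, e2, e3, Complex.ofReal_mul, ← Complex.ofReal_cpow hx.1,
      ← Complex.ofReal_cpow (by linarith [hx.2])]
  have hne : Real.Gamma (a + b) ≠ 0 := (Real.Gamma_pos_of_pos (by linarith)).ne'
  have h2 : ((Real.Gamma a * Real.Gamma b : ℝ) : ℂ)
      = ((Real.Gamma (a+b) * ∫ x in (0:ℝ)..1, x ^ (a - 1) * (1 - x) ^ (b - 1) : ℝ) : ℂ) := by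
    rw [Complex.ofReal_mul, Complex.ofReal_mul, ← Complex.Gamma_ofReal, ← Complex.Gamma_ofReal,
      ← Complex.Gamma_ofReal, ← hβ]
    push_cast
    exact key
  have h3 := Complex.ofReal_injective h2
  field_simp
  linarith [h3]

lemma gamma_16_56 : Real.Gamma (1/6) * Real.Gamma (5/6) = 2 * π := by
  have h := Real.Gamma_mul_Gamma_one_sub (1/6)
  have : (1 : ℝ) - 1/6 = 5/6 := by norm_num
  rw [this] at h
  rw [h]
  have : π * (1/6) = π / 6 := by ring
  rw [this, Real.sin_pi_div_six]
  ring

lemma gamma_76 : Real.Gamma (7/6) = (1/6) * Real.Gamma (1/6) := by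
  have h := Real.Gamma_add_one (s := 1/6) (by norm_num)
  norm_num at h ⊢
  convert h using 2 <;> norm_num

lemma gamma_116 : Real.Gamma (11/6) = (5/6) * Real.Gamma (5/6) := by
  have h := Real.Gamma_add_one (s := 5/6) (by norm_num)
  convert h using 2 <;> norm_num

lemma gamma_136 : Real.Gamma (13/6) = (7/36) * Real.Gamma (1/6) := by
  have h := Real.Gamma_add_one (s := 7/6) (by norm_num)
  have e : (7:ℝ)/6 + 1 = 13/6 := by norm_num
  rw [e] at h
  rw [h, gamma_76]; ring

lemma gamma_two : Real.Gamma 2 = 1 := by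
  have h := Real.Gamma_add_one (s := 1) (by norm_num)
  norm_num [Real.Gamma_one] at h
  convert h using 2
  norm_num

lemma gamma_three : Real.Gamma 3 = 2 := by
  have h := Real.Gamma_add_one (s := 2) (by norm_num)
  have e : (2:ℝ) + 1 = 3 := by norm_num
  rw [e] at h
  rw [h, gamma_two]; ring

lemma beta1 : ∫ x in (0:ℝ)..1, x ^ (-(1/6) : ℝ) * (1-x) ^ ((1/6) : ℝ) = π / 3 := by
  have h := real_beta (a := 5/6) (b := 7/6) (by norm_num) (by norm_num)
  norm_num at h
  rw [h, gamma_76]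
  linear_combination (1/6) * gamma_16_56

lemma beta2 : ∫ x in (0:ℝ)..1, x ^ ((1/6) : ℝ) * (1-x) ^ (-(1/6) : ℝ) = π / 3 := by
  have h := real_beta (a := 7/6) (b := 5/6) (by norm_num) (by norm_num)
  norm_num at h
  rw [h, gamma_76]
  linear_combination (1/6) * gamma_16_56

lemma beta3 : ∫ x in (0:ℝ)..1, x ^ ((5/6) : ℝ) * (1-x) ^ ((1/6) : ℝ) = 5 * π / 36 := by
  have h := real_beta (a := 11/6) (b := 7/6) (by norm_num) (by norm_num)
  norm_num at h
  rw [h, gamma_76, gamma_116]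
  linear_combination (5/72) * gamma_16_56

lemma beta4 : ∫ x in (0:ℝ)..1, x ^ ((7/6) : ℝ) * (1-x) ^ (-(1/6) : ℝ) = 7 * π / 36 := by
  have h := real_beta (a := 13/6) (b := 5/6) (by norm_num) (by norm_num)
  norm_num at h
  rw [h, gamma_136]
  linear_combination (7/72) * gamma_16_56


noncomputable def Efun (x : ℝ) : ℝ :=
  27 / π * ((x * (1 - x)) ^ (-(1/6) : ℝ) * ((1 - x) ^ ((1/3) : ℝ) - x ^ ((1/3) : ℝ)) * (1 - 2*x))

noncomputable def phif (x : ℝ) : ℝ := 6 * Real.sqrt 3 * Real.sqrt (x * (1 - x))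

noncomputable def phid (x : ℝ) : ℝ := 3 * Real.sqrt 3 * (1 - 2*x) / Real.sqrt (x * (1 - x))

noncomputable def g2 (t : ℝ) : ℝ :=
  1 / (2 * π) * (3 * Real.sqrt 3) ^ ((1:ℝ)/3) * t ^ ((2:ℝ)/3) *
    ((1 + Real.sqrt (1 - t ^ 2 / (3 * Real.sqrt 3) ^ 2)) ^ ((1:ℝ) / 3)
      - (1 - Real.sqrt (1 - t ^ 2 / (3 * Real.sqrt 3) ^ 2)) ^ ((1:ℝ) / 3))

lemma g2_cont : Continuous g2 := by
  unfold g2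
  have h3 : Continuous fun t : ℝ => Real.sqrt (1 - t ^ 2 / (3 * Real.sqrt 3) ^ 2) :=
    Real.continuous_sqrt.comp (by continuity)
  have hc : ∀ c : ℝ, 0 ≤ c → Continuous fun x : ℝ => x ^ c := fun c hc =>
    Real.continuous_rpow_const hc
  refine Continuous.mul (Continuous.mul continuous_const ((hc _ (by norm_num)).comp ?_)) ?_
  · exact continuous_id
  · exact ((hc _ (by norm_num)).comp (continuous_const.add h3)).sub
      ((hc _ (by norm_num)).comp (continuous_const.sub h3))

lemma phif_cont : Continuous phif :=
  continuous_const.mul (Real.continuous_sqrt.comp (by continuity))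

lemma contOn_rpow_ne {c : ℝ} {s : Set ℝ} (hs : ∀ x ∈ s, x ≠ 0) :
    ContinuousOn (fun x : ℝ => x ^ c) s := fun x hx =>
  (Real.continuousAt_rpow_const x c (Or.inl (hs x hx))).continuousWithinAt

lemma intInt {p q : ℝ} (hp : -1 < p) (hq : -1 < q) :
    IntervalIntegrable (fun x : ℝ => x ^ p * (1 - x) ^ q) volume 0 1 := by
  have h1 : IntervalIntegrable (fun x : ℝ => x ^ p * (1 - x) ^ q) volume 0 (1/2) := by
    refine (intervalIntegrable_rpow' hp).mul_continuousOn ?_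
    refine ContinuousOn.comp (contOn_rpow_ne (s := {y : ℝ | y ≠ 0}) fun y hy => hy)
      (by fun_prop) ?_
    intro x hx
    rw [Set.uIcc_of_le (by norm_num : (0:ℝ) ≤ 1/2)] at hx
    have : x ≤ 1/2 := hx.2
    simp only [Set.mem_setOf_eq]
    intro h
    linarith [h]
  have h2 : IntervalIntegrable (fun x : ℝ => x ^ p * (1 - x) ^ q) volume (1/2) 1 := by
    have base : IntervalIntegrable (fun x : ℝ => (1 - x) ^ q) volume (1/2) 1 := by
      have := (intervalIntegrable_rpow' hq (a := 0) (b := 1/2)).comp_sub_left 1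
      norm_num at this
      exact this.symm
    refine base.continuousOn_mul ?_
    refine ContinuousOn.comp (contOn_rpow_ne (s := {y : ℝ | y ≠ 0}) fun y hy => hy)
      (by fun_prop) ?_
    intro x hx
    rw [Set.uIcc_of_le (by norm_num : (1:ℝ)/2 ≤ 1)] at hx
    have : 1/2 ≤ x := hx.1
    simp only [Set.mem_setOf_eq]
    intro h
    linarith [h]
  exact h1.trans h2

lemma Efun_symm (x : ℝ) : Efun (1 - x) = Efun x := by
  unfold Efun
  have h1 : (1:ℝ) - (1 - x) = x := by ring
  rw [h1, mul_comm (1 - x) x]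
  ring

lemma Efun_expand : Set.EqOn Efun
    (fun x : ℝ => 27 / π * (x ^ (-(1/6) : ℝ) * (1-x) ^ ((1/6) : ℝ)
      - 2 * (x ^ ((5/6) : ℝ) * (1-x) ^ ((1/6) : ℝ))
      - x ^ ((1/6) : ℝ) * (1-x) ^ (-(1/6) : ℝ)
      + 2 * (x ^ ((7/6) : ℝ) * (1-x) ^ (-(1/6) : ℝ)))) (Set.uIcc 0 1) := by
  intro x hx
  rw [Set.uIcc_of_le (by norm_num : (0:ℝ) ≤ 1)] at hx
  obtain ⟨hx0, hx1⟩ := hx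
  have h1x : (0:ℝ) ≤ 1 - x := by linarith
  unfold Efun
  rw [Real.mul_rpow hx0 h1x]
  have e1 : (1 - x) ^ (-(1/6) : ℝ) * (1 - x) ^ ((1/3) : ℝ) = (1 - x) ^ ((1/6) : ℝ) := by
    rw [← Real.rpow_add' h1x (by norm_num : (-(1/6) : ℝ) + 1/3 ≠ 0)]
    norm_num
  have e2 : x ^ (-(1/6) : ℝ) * x ^ ((1/3) : ℝ) = x ^ ((1/6) : ℝ) := by
    rw [← Real.rpow_add' hx0 (by norm_num : (-(1/6) : ℝ) + 1/3 ≠ 0)]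
    norm_num
  have e3 : x * x ^ (-(1/6) : ℝ) = x ^ ((5/6) : ℝ) := by
    nth_rewrite 1 [← Real.rpow_one x]
    rw [← Real.rpow_add' hx0 (by norm_num : (1:ℝ) + -(1/6) ≠ 0)]
    norm_num
  have e4 : x * x ^ ((1/6) : ℝ) = x ^ ((7/6) : ℝ) := by
    nth_rewrite 1 [← Real.rpow_one x]
    rw [← Real.rpow_add' hx0 (by norm_num : (1:ℝ) + 1/6 ≠ 0)]
    norm_num
  linear_combination (27/π) * ((x ^ (-(1/6):ℝ) * (1-2*x)) * e1
    - ((1-x) ^ (-(1/6):ℝ) * (1-2*x)) * e2 - (2 * (1-x) ^ ((1/6):ℝ)) * e3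
    + (2 * (1-x) ^ (-(1/6):ℝ)) * e4)

lemma Efun_intInt : IntervalIntegrable Efun volume 0 1 := by
  rw [intervalIntegrable_iff_integrableOn_Icc_of_le (by norm_num : (0:ℝ) ≤ 1)]
  have h : IntervalIntegrable (fun x : ℝ => 27 / π * (x ^ (-(1/6) : ℝ) * (1-x) ^ ((1/6) : ℝ)
      - 2 * (x ^ ((5/6) : ℝ) * (1-x) ^ ((1/6) : ℝ))
      - x ^ ((1/6) : ℝ) * (1-x) ^ (-(1/6) : ℝ)
      + 2 * (x ^ ((7/6) : ℝ) * (1-x) ^ (-(1/6) : ℝ)))) volume 0 1 := by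
    apply IntervalIntegrable.const_mul
    exact (((intInt (by norm_num) (by norm_num)).sub
      ((intInt (by norm_num) (by norm_num)).const_mul 2)).sub
      (intInt (by norm_num) (by norm_num))).add
      ((intInt (by norm_num) (by norm_num)).const_mul 2)
  rw [intervalIntegrable_iff_integrableOn_Icc_of_le (by norm_num : (0:ℝ) ≤ 1)] at h
  refine h.congr_fun ?_ measurableSet_Icc
  intro x hx
  exact (Efun_expand (by rwa [Set.uIcc_of_le (by norm_num : (0:ℝ) ≤ 1)])).symm

lemma Efun_integral_01 : ∫ x in (0:ℝ)..1, Efun x = 3 := by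
  rw [intervalIntegral.integral_congr Efun_expand]
  rw [intervalIntegral.integral_const_mul]
  have i1 := intInt (p := -(1/6)) (q := 1/6) (by norm_num) (by norm_num)
  have i2 := intInt (p := 5/6) (q := 1/6) (by norm_num) (by norm_num)
  have i3 := intInt (p := 1/6) (q := -(1/6)) (by norm_num) (by norm_num)
  have i4 := intInt (p := 7/6) (q := -(1/6)) (by norm_num) (by norm_num)
  rw [intervalIntegral.integral_add (((i1.sub (i2.const_mul 2))).sub i3) (i4.const_mul 2),
    intervalIntegral.integral_sub (i1.sub (i2.const_mul 2)) i3,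
    intervalIntegral.integral_sub i1 (i2.const_mul 2),
    intervalIntegral.integral_const_mul, intervalIntegral.integral_const_mul,
    beta1, beta2, beta3, beta4]
  field_simp
  ring

lemma Efun_integral_0half : ∫ x in (0:ℝ)..(1/2), Efun x = 3 / 2 := by
  have hsplit := intervalIntegral.integral_add_adjacent_intervals
    (Efun_intInt.mono_set (by rw [Set.uIcc_of_le (by norm_num : (0:ℝ) ≤ 1/2),
      Set.uIcc_of_le (by norm_num : (0:ℝ) ≤ 1)]; exact Set.Icc_subset_Icc (le_refl _) (by norm_num)))
    (Efun_intInt.mono_set (by rw [Set.uIcc_of_le (by norm_num : (1:ℝ)/2 ≤ 1),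
      Set.uIcc_of_le (by norm_num : (0:ℝ) ≤ 1)]; exact Set.Icc_subset_Icc (by norm_num) (le_refl _)))
  have hrefl : ∫ x in (1/2 : ℝ)..1, Efun x = ∫ x in (0:ℝ)..(1/2), Efun x := by
    have h := intervalIntegral.integral_comp_sub_left (a := (0:ℝ)) (b := 1/2) Efun 1
    rw [show (1:ℝ) - 1/2 = 1/2 by norm_num, show (1:ℝ) - 0 = 1 by norm_num] at h
    rw [← h]
    exact intervalIntegral.integral_congr fun x _ => Efun_symm x
  rw [Efun_integral_01, hrefl] at hsplit
  linarith [hsplit]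

lemma key_eq {x : ℝ} (hx0 : 0 < x) (hx1 : x ≤ 1/2) : phid x * g2 (phif x) = Efun x := by
  have h1x : (0:ℝ) < 1 - x := by linarith
  have hu : 0 < x * (1 - x) := mul_pos hx0 h1x
  have hsu : 0 < Real.sqrt (x * (1-x)) := Real.sqrt_pos.mpr hu
  have hs3 : (0:ℝ) < Real.sqrt 3 := Real.sqrt_pos.mpr (by norm_num)
  have hs3sq : Real.sqrt 3 ^ 2 = 3 := Real.sq_sqrt (by norm_num)
  have hsusq : Real.sqrt (x*(1-x)) ^ 2 = x*(1-x) := Real.sq_sqrt hu.le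
  have ephi : phif x ^ 2 = 108 * (x*(1-x)) := by
    unfold phif; rw [mul_pow, mul_pow, hs3sq, hsusq]; norm_num
  have e27 : (3*Real.sqrt 3 : ℝ)^2 = 27 := by rw [mul_pow, hs3sq]; norm_num
  have harg : 1 - phif x ^ 2 / (3 * Real.sqrt 3) ^ 2 = (1 - 2*x)^2 := by
    rw [ephi, e27]; ring
  have hsq : Real.sqrt (1 - phif x ^ 2 / (3 * Real.sqrt 3) ^ 2) = 1 - 2*x := by
    rw [harg, Real.sqrt_sq (by linarith)]
  have hplus : (1:ℝ) + (1 - 2*x) = 2*(1-x) := by ring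
  have hminus : (1:ℝ) - (1 - 2*x) = 2*x := by ring
  have hphipow : (phif x) ^ ((2:ℝ)/3)
      = (6*Real.sqrt 3) ^ ((2:ℝ)/3) * (x*(1-x)) ^ ((1:ℝ)/3) := by
    have hsq23 : Real.sqrt (x*(1-x)) ^ ((2:ℝ)/3) = (x*(1-x)) ^ ((1:ℝ)/3) := by
      rw [Real.sqrt_eq_rpow, ← Real.rpow_mul hu.le]
      norm_num
    unfold phif
    rw [Real.mul_rpow (by positivity) (Real.sqrt_nonneg _), hsq23]
  have hconst : (3*Real.sqrt 3) ^ ((1:ℝ)/3) * (6*Real.sqrt 3) ^ ((2:ℝ)/3)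
      = 2 ^ ((2:ℝ)/3) * (3*Real.sqrt 3) := by
    have h2 : ((2:ℝ) * (3*Real.sqrt 3)) ^ ((2:ℝ)/3)
        = 2^((2:ℝ)/3) * (3*Real.sqrt 3)^((2:ℝ)/3) :=
      Real.mul_rpow (by norm_num) (by positivity)
    rw [show (6*Real.sqrt 3 : ℝ) = 2 * (3*Real.sqrt 3) by ring, h2]
    have h : (3*Real.sqrt 3 : ℝ) ^ ((1:ℝ)/3) * (3*Real.sqrt 3) ^ ((2:ℝ)/3)
        = (3*Real.sqrt 3) := by
      rw [← Real.rpow_add (by positivity)]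
      norm_num
    linear_combination (2:ℝ) ^ ((2:ℝ)/3) * h
  have hinv : (Real.sqrt (x*(1-x)))⁻¹ = (x*(1-x)) ^ (-((1:ℝ)/2)) := by
    rw [Real.sqrt_eq_rpow, ← Real.rpow_neg hu.le]
  have hupow : (x*(1-x)) ^ (-((1:ℝ)/2)) * (x*(1-x)) ^ ((1:ℝ)/3)
      = (x*(1-x)) ^ (-(1/6) : ℝ) := by
    rw [← Real.rpow_add hu]; norm_num
  have h2pow : (2:ℝ) ^ ((2:ℝ)/3) * 2 ^ ((1:ℝ)/3) = 2 := by
    rw [← Real.rpow_add (by norm_num)]; norm_num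
  unfold g2 phid Efun
  rw [hsq, hplus, hminus, Real.mul_rpow (by norm_num) h1x.le,
    Real.mul_rpow (by norm_num) hx0.le, hphipow, div_eq_mul_inv, hinv]
  linear_combination
    (3/(2*π)*Real.sqrt 3*(1-2*x)*((x*(1-x)) ^ (-((1:ℝ)/2)))*((x*(1-x)) ^ ((1:ℝ)/3))
      * ((2:ℝ)^((1:ℝ)/3))*((1-x)^((1/3):ℝ) - x^((1/3):ℝ))) * hconst
    + (9/(2*π)*Real.sqrt 3^2*(1-2*x)*((x*(1-x)) ^ (-((1:ℝ)/2)))*((x*(1-x)) ^ ((1:ℝ)/3))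
      * ((1-x)^((1/3):ℝ) - x^((1/3):ℝ))) * h2pow
    + (9/π*(1-2*x)*((x*(1-x)) ^ (-((1:ℝ)/2)))*((x*(1-x)) ^ ((1:ℝ)/3))
      * ((1-x)^((1/3):ℝ) - x^((1/3):ℝ))) * hs3sq
    + (27/π*(1-2*x)*((1-x)^((1/3):ℝ) - x^((1/3):ℝ))) * hupow

lemma phif_deriv {x : ℝ} (hx0 : 0 < x) (hx1 : x < 1/2) : HasDerivAt phif (phid x) x := by
  have h1x : (0:ℝ) < 1 - x := by linarith
  have hu : 0 < x * (1 - x) := mul_pos hx0 h1x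
  have hsu : 0 < Real.sqrt (x * (1-x)) := Real.sqrt_pos.mpr hu
  have hinner : HasDerivAt (fun y : ℝ => y * (1 - y)) (1 - 2*x) x := by
    have := (hasDerivAt_id x).mul ((hasDerivAt_const x (1:ℝ)).sub (hasDerivAt_id x))
    simp only [id_eq] at this
    exact this.congr_deriv (by simp only [Pi.sub_apply, id_eq]; ring)
  have hsqrt : HasDerivAt (fun y : ℝ => Real.sqrt (y * (1 - y)))
      (1 / (2 * Real.sqrt (x * (1-x))) * (1 - 2*x)) x :=
    (Real.hasDerivAt_sqrt hu.ne').comp x hinner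
  have := hsqrt.const_mul (6 * Real.sqrt 3)
  refine HasDerivAt.congr_deriv (f := phif) this ?_
  unfold phid
  field_simp
  ring

lemma phif_zero : phif 0 = 0 := by unfold phif; norm_num
lemma phif_half : phif (1/2) = 3 * Real.sqrt 3 := by
  unfold phif
  rw [show ((1:ℝ)/2 * (1 - 1/2)) = (1/2)^2 by norm_num, Real.sqrt_sq (by norm_num)]
  ring

lemma key_eqOn : Set.EqOn (fun x => phid x • (g2 ∘ phif) x) Efun (Set.uIcc 0 (1/2)) := by
  intro x hx
  rw [Set.uIcc_of_le (by norm_num : (0:ℝ) ≤ 1/2)] at hx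
  simp only [smul_eq_mul, Function.comp_apply]
  rcases eq_or_lt_of_le hx.1 with h0 | h0
  · subst h0
    unfold phid Efun
    norm_num [Real.zero_rpow]
  · exact key_eq h0 hx.2

lemma g_eq_g2 : Set.EqOn
    (fun t : ℝ => t * ((1 / (2 * π)) * (t / (3 * Real.sqrt 3)) ^ (-(1 : ℝ) / 3) *
      ((1 + Real.sqrt (1 - t ^ 2 / (3 * Real.sqrt 3) ^ 2)) ^ ((1 : ℝ) / 3)
        - (1 - Real.sqrt (1 - t ^ 2 / (3 * Real.sqrt 3) ^ 2)) ^ ((1 : ℝ) / 3))))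
    g2 (Set.uIcc 0 (3 * Real.sqrt 3)) := by
  have hb : (0:ℝ) < 3 * Real.sqrt 3 := by positivity
  intro t ht
  rw [Set.uIcc_of_le hb.le] at ht
  simp only
  unfold g2
  rcases eq_or_lt_of_le ht.1 with h0 | h0
  · rw [← h0]
    rw [Real.zero_rpow (by norm_num : ((2:ℝ)/3) ≠ 0)]
    ring
  · have e1 : (t / (3 * Real.sqrt 3)) ^ (-(1 : ℝ) / 3)
        = t ^ (-(1:ℝ)/3) * (3 * Real.sqrt 3) ^ ((1:ℝ)/3) := by
      rw [Real.div_rpow h0.le hb.le, show (-(1:ℝ)/3) = -((1:ℝ)/3) by norm_num,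
        Real.rpow_neg h0.le, Real.rpow_neg hb.le, div_eq_mul_inv, inv_inv]
    have e2 : t * t ^ (-(1:ℝ)/3) = t ^ ((2:ℝ)/3) := by
      nth_rewrite 1 [← Real.rpow_one t]
      rw [← Real.rpow_add h0]
      norm_num
    rw [e1]
    linear_combination (1 / (2 * π) * (3 * Real.sqrt 3) ^ ((1:ℝ)/3) *
      ((1 + Real.sqrt (1 - t ^ 2 / (3 * Real.sqrt 3) ^ 2)) ^ ((1 : ℝ) / 3)
        - (1 - Real.sqrt (1 - t ^ 2 / (3 * Real.sqrt 3) ^ 2)) ^ ((1 : ℝ) / 3))) * e2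


theorem boson_limiting_density_mean :
    (∫ t in (0 : ℝ)..(3 * Real.sqrt 3),
        t * ((1 / (2 * π)) * (t / (3 * Real.sqrt 3)) ^ (-(1 : ℝ) / 3) *
          ((1 + Real.sqrt (1 - t ^ 2 / (3 * Real.sqrt 3) ^ 2)) ^ ((1 : ℝ) / 3)
            - (1 - Real.sqrt (1 - t ^ 2 / (3 * Real.sqrt 3) ^ 2)) ^ ((1 : ℝ) / 3))))
      = 3 / 2 := by
  rw [intervalIntegral.integral_congr g_eq_g2]
  have hEint : IntervalIntegrable Efun volume 0 (1/2) :=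
    Efun_intInt.mono_set (by
      rw [Set.uIcc_of_le (by norm_num : (0:ℝ) ≤ 1/2),
        Set.uIcc_of_le (by norm_num : (0:ℝ) ≤ 1)]
      exact Set.Icc_subset_Icc le_rfl (by norm_num))
  have hEOn : IntegrableOn Efun (Set.uIcc 0 (1/2)) volume := by
    rw [Set.uIcc_of_le (by norm_num : (0:ℝ) ≤ 1/2)]
    exact (intervalIntegrable_iff_integrableOn_Icc_of_le (by norm_num)).mp hEint
  have hsub := intervalIntegral.integral_comp_smul_deriv''' (a := 0) (b := 1/2)
    (f := phif) (f' := phid) (g := g2)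
    phif_cont.continuousOn
    (fun x hx => by
      rw [show min (0:ℝ) (1/2) = 0 by norm_num,
        show max (0:ℝ) (1/2) = 1/2 by norm_num] at hx
      exact (phif_deriv hx.1 hx.2).hasDerivWithinAt)
    g2_cont.continuousOn
    (g2_cont.continuousOn.integrableOn_compact (isCompact_uIcc.image phif_cont))
    (hEOn.congr_fun key_eqOn.symm measurableSet_uIcc)
  rw [phif_zero, phif_half] at hsub
  rw [← hsub, intervalIntegral.integral_congr key_eqOn]
  exact Efun_integral_0half
end
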